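/- Let m and k be positive integers whose k-th cascade representation has leading term n_k > k, and let m = Σ_{i=0}^{s} C(a_{k-i}, k-i)_{n_k-1-i} be the (n_k-1)-colored Turán representation of m in degree k. Suppose that s ≤ 1, or that s = 2 and a_{k-2} = k-2. Then there exists a finite simple graph G with c_k(G) = m and c_{k+1}(G) = smbd_k(m) = Σ_{i=0}^{s} C(a_{k-i}, k-i+1)_{n_k-1-i}. -/

import Mathlib

/-- The number of `n`-cliques (sets of `n` pairwise-adjacent vertices) of a finite simple graph. -/
noncomputable def cliqueCount {V : Type*} [Fintype V] (G : SimpleGraph V) (n : ℕ) : ℕ :=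
  Set.ncard {t : Finset V | G.IsNClique n t}

/-- `a i` stands for `n_{k-i}`: the sequence `(n_k, …, n_{k-s})` is admissible for `k` iff
`n_k > n_{k-1} > … > n_{k-s} ≥ k-s > 0`. -/
def Admissible (k s : ℕ) (a : ℕ → ℕ) : Prop :=
  s < k ∧ (∀ i < s, a (i + 1) < a i) ∧ k - s ≤ a s

/-- The `k`-th cascade representation `m = Σ_{i=0}^{s} C(n_{k-i}, k-i)` with
`n_k > n_{k-1} > … > n_{k-s} ≥ k-s > 0`; `n i` stands for `n_{k-i}`. -/
def CascadeRep (m k s : ℕ) (n : ℕ → ℕ) : Prop :=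
  Admissible k s n ∧ m = ∑ i ∈ Finset.range (s + 1), (n i).choose (k - i)

/-- `C(n, k)_r`: the number of `k`-cliques of the Turán graph `T_{n,r}`. -/
noncomputable def turanC (n k r : ℕ) : ℕ := cliqueCount (SimpleGraph.turanGraph n r) k

/-- The `r`-colored Turán representation of `m` in degree `k`:
`m = Σ_{i=0}^{s} C(n_{k-i}, k-i)_{r-i}` with `n_{k-i} - ⌊n_{k-i}/(r-i)⌋ > n_{k-i-1}` for
`0 ≤ i < s` and `n_{k-s} ≥ k-s > 0`; `a i` stands for `n_{k-i}`. -/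
def ColoredRep (m k r s : ℕ) (a : ℕ → ℕ) : Prop :=
  s < k ∧ (∀ i < s, a (i + 1) < a i - a i / (r - i)) ∧ k - s ≤ a s ∧
  m = ∑ i ∈ Finset.range (s + 1), turanC (a i) (k - i) (r - i)

open SimpleGraph Finset

section Arith

lemma phi_mod (r x : ℕ) (hr : 2 ≤ r) : (x + x / (r - 1)) % r = x % (r - 1) := by
  have h := Nat.div_add_mod x (r - 1)
  have hlt : x % (r - 1) < r - 1 := Nat.mod_lt _ (by omega)
  have e : x + x / (r - 1) = x % (r - 1) + (x / (r - 1)) * r := by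
    have h2 : (r - 1) * (x / (r - 1)) + x / (r - 1) = x / (r - 1) * r := by
      have hr1 : r - 1 + 1 = r := by omega
      calc (r - 1) * (x / (r - 1)) + x / (r - 1) = (r - 1 + 1) * (x / (r - 1)) := by ring
        _ = x / (r - 1) * r := by rw [hr1]; ring
    omega
  rw [e, Nat.add_mul_mod_self_right, Nat.mod_eq_of_lt (by omega)]

lemma phi_lt (A B r x : ℕ) (hr : 2 ≤ r) (hB : B + A / r < A) (hx : x < B) :
    x + x / (r - 1) < A := by
  have h1 : x / (r - 1) * (r - 1) ≤ x := Nat.div_mul_le_self _ _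
  have key : x / (r - 1) ≤ A / r := by
    by_contra h
    push_neg at h
    have h2 : (A / r + 1) * (r - 1) ≤ x / (r - 1) * (r - 1) := Nat.mul_le_mul_right _ h
    have h3 : A < (A / r + 1) * r := by
      have hdm := Nat.div_add_mod A r
      have hmlt := Nat.mod_lt A (show 0 < r by omega)
      have e : (A / r + 1) * r = r * (A / r) + r := by ring
      omega
    have e2 : (A / r + 1) * r = (A / r + 1) * (r - 1) + (A / r + 1) := by
      have hr1 : r - 1 + 1 = r := by omega
      calc (A / r + 1) * r = (A / r + 1) * (r - 1 + 1) := by rw [hr1]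
        _ = (A / r + 1) * (r - 1) + (A / r + 1) := by ring
    omega
  omega

end Arith

section Apex

/-- Add an apex vertex adjacent exactly to `S`. -/
def addApex {V : Type*} (G : SimpleGraph V) (S : Set V) : SimpleGraph (Option V) where
  Adj u v := match u, v with
    | some x, some y => G.Adj x y
    | some x, none => x ∈ S
    | none, some y => y ∈ S
    | none, none => False
  symm := ⟨by rintro (_ | x) (_ | y) h <;> first | exact h | exact h.symm⟩
  loopless := ⟨by rintro (_ | x) h <;> first | exact h | exact G.irrefl h⟩

@[simp] lemma addApex_adj_some_some {V : Type*} (G : SimpleGraph V) (S : Set V) (x y : V) :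
    (addApex G S).Adj (some x) (some y) ↔ G.Adj x y := Iff.rfl
@[simp] lemma addApex_adj_none_some {V : Type*} (G : SimpleGraph V) (S : Set V) (y : V) :
    (addApex G S).Adj none (some y) ↔ y ∈ S := Iff.rfl
@[simp] lemma addApex_adj_some_none {V : Type*} (G : SimpleGraph V) (S : Set V) (x : V) :
    (addApex G S).Adj (some x) none ↔ x ∈ S := Iff.rfl

lemma isNClique_map_some {V : Type*} [DecidableEq V] (G : SimpleGraph V) (S : Set V)
    (j : ℕ) (t : Finset V) :
    (addApex G S).IsNClique j (t.map Function.Embedding.some) ↔ G.IsNClique j t := by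
  simp only [isNClique_iff, Finset.card_map, and_congr_left_iff]
  intro _
  constructor
  · intro h x hx y hy hxy
    have hm : ∀ z : V, z ∈ t →
        (some z : Option V) ∈ (↑(t.map Function.Embedding.some) : Set (Option V)) := by
      intro z hz; simp [hz]
    have := h (hm x hx) (hm y hy) (by simp [hxy])
    simpa using this
  · intro h u hu v hv huv
    simp only [Finset.coe_map, Set.mem_image, Finset.mem_coe] at hu hv
    obtain ⟨x, hx, rfl⟩ := hu
    obtain ⟨y, hy, rfl⟩ := hv
    have hxy : x ≠ y := fun e => huv (by rw [e])
    exact h hx hy hxy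

lemma isNClique_insert_none {V : Type*} [DecidableEq V] (G : SimpleGraph V) (S : Set V)
    (j : ℕ) (t : Finset V) :
    (addApex G S).IsNClique (j + 1) (insert none (t.map Function.Embedding.some)) ↔
      (G.IsNClique j t ∧ ↑t ⊆ S) := by
  have hnm : (none : Option V) ∉ t.map Function.Embedding.some := by simp
  have hm : ∀ z : V, z ∈ t →
      (some z : Option V) ∈
        (↑(insert none (t.map Function.Embedding.some)) : Set (Option V)) := by
    intro z hz; simp [hz]
  have hnmem : (none : Option V) ∈
      (↑(insert none (t.map Function.Embedding.some)) : Set (Option V)) := by simp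
  constructor
  · intro h
    obtain ⟨hcl, hcard⟩ := h
    have hcardt : t.card = j := by
      rw [Finset.card_insert_of_notMem hnm] at hcard
      simpa using hcard
    refine ⟨⟨?_, hcardt⟩, ?_⟩
    · intro x hx y hy hxy
      have := hcl (hm x hx) (hm y hy) (by simpa using hxy)
      simpa using this
    · intro x hx
      have := hcl hnmem (hm x hx) (by simp)
      simpa using this
  · rintro ⟨⟨hcl, hcard⟩, hsub⟩
    refine ⟨?_, ?_⟩
    · intro u hu v hv huv
      simp only [Finset.coe_insert, Set.mem_insert_iff, Finset.coe_map, Set.mem_image,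
        Finset.mem_coe] at hu hv
      rcases hu with rfl | ⟨x, hx, rfl⟩
      · rcases hv with rfl | ⟨y, hy, rfl⟩
        · exact absurd rfl huv
        · simpa using hsub hy
      · rcases hv with rfl | ⟨y, hy, rfl⟩
        · simpa using hsub hx
        · have hxy : x ≠ y := fun e => huv (by rw [e])
          exact hcl hx hy hxy
    · rw [Finset.card_insert_of_notMem hnm, Finset.card_map, hcard]

lemma decompose_none_mem {V : Type*} [DecidableEq V] (u : Finset (Option V)) (h : none ∈ u) :
    insert none ((u.eraseNone).map Function.Embedding.some) = u := by
  rw [Finset.map_some_eraseNone, Finset.insert_erase h]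

lemma decompose_none_not_mem {V : Type*} [DecidableEq V] (u : Finset (Option V)) (h : none ∉ u) :
    (u.eraseNone).map Function.Embedding.some = u := by
  rw [Finset.map_some_eraseNone, Finset.erase_eq_of_notMem h]

lemma cliqueCount_addApex {V : Type*} [Fintype V] [DecidableEq V] (G : SimpleGraph V)
    (S : Set V) (j : ℕ) :
    cliqueCount (addApex G S) (j + 1) =
      cliqueCount G (j + 1) + Set.ncard {t : Finset V | G.IsNClique j t ∧ ↑t ⊆ S} := by
  have hsplit : {u : Finset (Option V) | (addApex G S).IsNClique (j + 1) u}
      = ((fun t : Finset V => t.map Function.Embedding.some) ''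
          {t : Finset V | G.IsNClique (j + 1) t})
        ∪ ((fun t : Finset V => insert none (t.map Function.Embedding.some)) ''
          {t : Finset V | G.IsNClique j t ∧ ↑t ⊆ S}) := by
    ext u
    simp only [Set.mem_setOf_eq, Set.mem_union, Set.mem_image]
    constructor
    · intro hu
      by_cases hn : none ∈ u
      · exact Or.inr ⟨u.eraseNone, (isNClique_insert_none G S j u.eraseNone).1
          (by rw [decompose_none_mem u hn]; exact hu), decompose_none_mem u hn⟩
      · exact Or.inl ⟨u.eraseNone, (isNClique_map_some G S (j + 1) u.eraseNone).1
          (by rw [decompose_none_not_mem u hn]; exact hu), decompose_none_not_mem u hn⟩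
    · rintro (⟨t, ht, rfl⟩ | ⟨t, ht, rfl⟩)
      · exact (isNClique_map_some G S (j + 1) t).2 ht
      · exact (isNClique_insert_none G S j t).2 ht
  have hdisj : Disjoint
      ((fun t : Finset V => t.map Function.Embedding.some) ''
        {t : Finset V | G.IsNClique (j + 1) t})
      ((fun t : Finset V => insert none (t.map Function.Embedding.some)) ''
        {t : Finset V | G.IsNClique j t ∧ ↑t ⊆ S}) := by
    rw [Set.disjoint_left]
    rintro u ⟨t, _, rfl⟩ ⟨t', _, he⟩
    have h1 : (none : Option V) ∉ t.map Function.Embedding.some := by simp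
    have he' : insert (none : Option V) (t'.map Function.Embedding.some)
        = t.map Function.Embedding.some := he
    rw [← he'] at h1
    exact h1 (Finset.mem_insert_self _ _)
  have hinj1 : Function.Injective (fun t : Finset V => t.map Function.Embedding.some) :=
    fun t t' h => Finset.map_injective _ h
  have hinj2 : Function.Injective
      (fun t : Finset V => insert none (t.map Function.Embedding.some)) := by
    intro t t' h
    have h1 : (none : Option V) ∉ t.map Function.Embedding.some := by simp
    have h2 : (none : Option V) ∉ t'.map Function.Embedding.some := by simp
    have := congrArg (fun u : Finset (Option V) => u.erase none) h
    simp only [Finset.erase_insert h1, Finset.erase_insert h2] at this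
    exact Finset.map_injective _ this
  show Set.ncard _ = _
  rw [hsplit, Set.ncard_union_eq hdisj (Set.toFinite _) (Set.toFinite _),
    Set.ncard_image_of_injective _ hinj1, Set.ncard_image_of_injective _ hinj2]
  rfl

end Apex

section Count

lemma ncard_cliques_map {V W : Type*} [Fintype V] [Fintype W] [DecidableEq V] [DecidableEq W]
    (G : SimpleGraph V) (H : SimpleGraph W) (f : W → V) (hinj : Function.Injective f)
    (hadj : ∀ x y : W, x ≠ y → (G.Adj (f x) (f y) ↔ H.Adj x y)) (j : ℕ) :
    Set.ncard {t : Finset V | G.IsNClique j t ∧ ↑t ⊆ Set.range f} = cliqueCount H j := by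
  classical
  have himg : {t : Finset V | G.IsNClique j t ∧ ↑t ⊆ Set.range f}
      = (fun s : Finset W => s.image f) '' {s : Finset W | H.IsNClique j s} := by
    ext t
    simp only [Set.mem_setOf_eq, Set.mem_image]
    constructor
    · rintro ⟨⟨hcl, hcard⟩, hsub⟩
      have himage : (t.preimage f hinj.injOn).image f = t := by
        ext y
        simp only [Finset.mem_image, Finset.mem_preimage]
        constructor
        · rintro ⟨x, hx, rfl⟩; exact hx
        · intro hy
          obtain ⟨x, rfl⟩ := hsub hy
          exact ⟨x, hy, rfl⟩
      refine ⟨t.preimage f hinj.injOn, ⟨?_, ?_⟩, himage⟩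
      · intro x hx y hy hxy
        rw [Finset.mem_coe, Finset.mem_preimage] at hx hy
        exact (hadj x y hxy).1 (hcl hx hy (fun e => hxy (hinj e)))
      · have hci := Finset.card_image_of_injective (t.preimage f hinj.injOn) hinj
        rw [himage] at hci
        rw [← hci]
        exact hcard
    · rintro ⟨s, ⟨hcl, hcard⟩, rfl⟩
      refine ⟨⟨?_, ?_⟩, ?_⟩
      · intro u hu v hv huv
        simp only [Finset.coe_image, Set.mem_image, Finset.mem_coe] at hu hv
        obtain ⟨x, hx, rfl⟩ := hu
        obtain ⟨y, hy, rfl⟩ := hv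
        have hxy : x ≠ y := fun e => huv (by rw [e])
        exact (hadj x y hxy).2 (hcl hx hy hxy)
      · rw [Finset.card_image_of_injective _ hinj, hcard]
      · intro y hy
        simp only [Finset.coe_image, Set.mem_image, Finset.mem_coe] at hy
        obtain ⟨x, _, rfl⟩ := hy
        exact ⟨x, rfl⟩
  rw [himg, Set.ncard_image_of_injective _ (Finset.image_injective hinj)]
  rfl

lemma cliqueCount_map_equiv {V W : Type*} [Fintype V] [Fintype W] [DecidableEq V]
    [DecidableEq W] (G : SimpleGraph V) (e : V ≃ W) (j : ℕ) :
    cliqueCount (G.map e.toEmbedding) j = cliqueCount G j := by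
  have hadj : ∀ x y : V, x ≠ y → ((G.map e.toEmbedding).Adj (e x) (e y) ↔ G.Adj x y) := by
    intro x y _
    simp only [SimpleGraph.map_adj]
    constructor
    · rintro ⟨a, b, hab, ha, hb⟩
      obtain rfl : a = x := e.injective ha
      obtain rfl : b = y := e.injective hb
      exact hab
    · intro h
      exact ⟨x, y, h, rfl, rfl⟩
  have h := ncard_cliques_map (G.map e.toEmbedding) G e e.injective hadj j
  rw [← h]
  show Set.ncard _ = Set.ncard _
  congr 1
  ext t
  simp [Set.subset_def, Equiv.range_eq_univ]

lemma cliqueCount_top (N j : ℕ) : cliqueCount (⊤ : SimpleGraph (Fin N)) j = N.choose j := by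
  have hset : {t : Finset (Fin N) | (⊤ : SimpleGraph (Fin N)).IsNClique j t}
      = ↑(Finset.powersetCard j (Finset.univ : Finset (Fin N))) := by
    ext t
    simp only [Set.mem_setOf_eq, isNClique_iff, Finset.mem_coe,
      Finset.mem_powersetCard_univ]
    constructor
    · rintro ⟨_, h⟩; exact h
    · intro h
      refine ⟨?_, h⟩
      intro x _ y _ hxy
      exact hxy
  show Set.ncard _ = _
  rw [hset, Set.ncard_coe_finset, Finset.card_powersetCard, Finset.card_univ, Fintype.card_fin]

lemma turanC_eq_choose (N j r : ℕ) (h : N ≤ r) : turanC N j r = N.choose j := by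
  rw [turanC, SimpleGraph.turanGraph_eq_top.mpr (Or.inr h)]
  exact cliqueCount_top N j

end Count

/-- Construction 3: for `m, k > 0` whose `k`-th cascade representation has leading term
`n_k > k`, with `(n_k - 1)`-colored Turán representation
`m = Σ_{i=0}^{s} C(a_{k-i}, k-i)_{n_k-1-i}`, if `s ≤ 1` or (`s = 2` and `a_{k-2} = k-2`),
then there is a finite simple graph `G` with `c_k(G) = m` and
`c_{k+1}(G) = smbd_k(m) = Σ_{i=0}^{s} C(a_{k-i}, k-i+1)_{n_k-1-i}`. -/
theorem construction_three (m k s0 : ℕ) (n : ℕ → ℕ) (hm : 0 < m) (hk : 0 < k)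
    (hcasc : CascadeRep m k s0 n) (hnk : k < n 0)
    (s : ℕ) (a : ℕ → ℕ) (hcol : ColoredRep m k (n 0 - 1) s a)
    (hcond : s ≤ 1 ∨ (s = 2 ∧ a 2 = k - 2)) :
    ∃ (nv : ℕ) (G : SimpleGraph (Fin nv)),
      cliqueCount G k = m ∧
      cliqueCount G (k + 1) =
        ∑ i ∈ Finset.range (s + 1), turanC (a i) (k - i + 1) (n 0 - 1 - i) := by
  classical
  obtain ⟨hsk, hgap, hlast, hsum⟩ := hcol
  have hrk : k ≤ n 0 - 1 := by omega
  set r := n 0 - 1 with hrdef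
  rcases hcond with hs | ⟨hs2, ha2⟩
  · interval_cases s
    · -- s = 0
      refine ⟨a 0, turanGraph (a 0) r, ?_, ?_⟩
      · rw [hsum, Finset.sum_range_one]
        simp only [Nat.sub_zero]
        rfl
      · rw [Finset.sum_range_one]
        simp only [Nat.sub_zero]
        rfl
    · -- s = 1
      have hk2 : 2 ≤ k := by omega
      have hr2 : 2 ≤ r := by omega
      have hgap0 : a 1 < a 0 - a 0 / r := by simpa using hgap 0 (by norm_num)
      have hBA : a 1 + a 0 / r < a 0 := by
        have := Nat.div_le_self (a 0) r
        omega
      let f : Fin (a 1) → Fin (a 0) := fun x =>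
        ⟨x.val + x.val / (r - 1), phi_lt (a 0) (a 1) r x.val hr2 hBA x.isLt⟩
      have hfinj : Function.Injective f := by
        intro x y h
        have h1 : x.val + x.val / (r - 1) = y.val + y.val / (r - 1) := congrArg Fin.val h
        have hmono : StrictMono (fun z : ℕ => z + z / (r - 1)) := fun z w hzw =>
          add_lt_add_of_lt_of_le hzw (Nat.div_le_div_right hzw.le)
        exact Fin.ext (hmono.injective h1)
      have hfadj : ∀ x y : Fin (a 1), x ≠ y →
          ((turanGraph (a 0) r).Adj (f x) (f y) ↔ (turanGraph (a 1) (r - 1)).Adj x y) := by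
        intro x y _
        show ((x.val + x.val / (r - 1)) % r ≠ (y.val + y.val / (r - 1)) % r) ↔ _
        rw [phi_mod r x.val hr2, phi_mod r y.val hr2]
        exact Iff.rfl
      have hc1 : ∀ j : ℕ, cliqueCount (addApex (turanGraph (a 0) r) (Set.range f)) (j + 1) =
          turanC (a 0) (j + 1) r + turanC (a 1) j (r - 1) := by
        intro j
        rw [cliqueCount_addApex,
          ncard_cliques_map (turanGraph (a 0) r) (turanGraph (a 1) (r - 1)) f hfinj hfadj j]
        rfl
      refine ⟨a 0 + 1,
        (addApex (turanGraph (a 0) r) (Set.range f)).map (finSuccEquiv (a 0)).symm.toEmbedding,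
        ?_, ?_⟩
      · rw [cliqueCount_map_equiv]
        have e1 := hc1 (k - 1)
        rw [show k - 1 + 1 = k from by omega] at e1
        rw [e1, hsum, Finset.sum_range_succ, Finset.sum_range_one]
        simp only [Nat.sub_zero]
      · rw [cliqueCount_map_equiv]
        rw [hc1 k, Finset.sum_range_succ, Finset.sum_range_one]
        simp only [Nat.sub_zero]
        rw [show k - 1 + 1 = k from by omega]
  · -- s = 2
    subst hs2
    have hk3 : 3 ≤ k := by omega
    have hr2 : 2 ≤ r := by omega
    have hgap0 : a 1 < a 0 - a 0 / r := by simpa using hgap 0 (by norm_num)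
    have hgap1 : a 2 < a 1 - a 1 / (r - 1) := hgap 1 (by norm_num)
    have hBA : a 1 + a 0 / r < a 0 := by
      have := Nat.div_le_self (a 0) r
      omega
    have hB1 : k - 1 ≤ a 1 := by
      have := Nat.sub_le (a 1) (a 1 / (r - 1))
      omega
    let f : Fin (a 1) → Fin (a 0) := fun x =>
      ⟨x.val + x.val / (r - 1), phi_lt (a 0) (a 1) r x.val hr2 hBA x.isLt⟩
    have hfinj : Function.Injective f := by
      intro x y h
      have h1 : x.val + x.val / (r - 1) = y.val + y.val / (r - 1) := congrArg Fin.val h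
      have hmono : StrictMono (fun z : ℕ => z + z / (r - 1)) := fun z w hzw =>
        add_lt_add_of_lt_of_le hzw (Nat.div_le_div_right hzw.le)
      exact Fin.ext (hmono.injective h1)
    have hfadj : ∀ x y : Fin (a 1), x ≠ y →
        ((turanGraph (a 0) r).Adj (f x) (f y) ↔ (turanGraph (a 1) (r - 1)).Adj x y) := by
      intro x y _
      show ((x.val + x.val / (r - 1)) % r ≠ (y.val + y.val / (r - 1)) % r) ↔ _
      rw [phi_mod r x.val hr2, phi_mod r y.val hr2]
      exact Iff.rfl
    have hfadj' : ∀ x y : Fin (a 1), x.val ≠ y.val → x.val < r - 1 → y.val < r - 1 →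
        (turanGraph (a 0) r).Adj (f x) (f y) := by
      intro x y hxy hx hy
      show (x.val + x.val / (r - 1)) % r ≠ (y.val + y.val / (r - 1)) % r
      rw [phi_mod r x.val hr2, phi_mod r y.val hr2,
        Nat.mod_eq_of_lt hx, Nat.mod_eq_of_lt hy]
      exact hxy
    have hc1 : ∀ j : ℕ, cliqueCount (addApex (turanGraph (a 0) r) (Set.range f)) (j + 1) =
        turanC (a 0) (j + 1) r + turanC (a 1) j (r - 1) := by
      intro j
      rw [cliqueCount_addApex,
        ncard_cliques_map (turanGraph (a 0) r) (turanGraph (a 1) (r - 1)) f hfinj hfadj j]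
      rfl
    let g : Fin (k - 1) → Option (Fin (a 0)) := fun i =>
      if h : i.val = 0 then none
      else some (f ⟨i.val - 1, by have := i.isLt; omega⟩)
    have hginj : Function.Injective g := by
      intro i j h
      by_cases hi : i.val = 0 <;> by_cases hj : j.val = 0
      · exact Fin.ext (by omega)
      · simp only [g, dif_pos hi, dif_neg hj] at h
        exact absurd h (by simp)
      · simp only [g, dif_pos hj, dif_neg hi] at h
        exact absurd h (by simp)
      · simp only [g, dif_neg hi, dif_neg hj, Option.some.injEq] at h
        have h2 := congrArg Fin.val (hfinj h)
        simp only at h2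
        exact Fin.ext (by omega)
    have hgadj : ∀ i j : Fin (k - 1), i ≠ j →
        ((addApex (turanGraph (a 0) r) (Set.range f)).Adj (g i) (g j) ↔
          (⊤ : SimpleGraph (Fin (k - 1))).Adj i j) := by
      intro i j hij
      have hij' : i.val ≠ j.val := fun e => hij (Fin.ext e)
      constructor
      · intro _
        exact hij
      · intro _
        by_cases hi : i.val = 0 <;> by_cases hj : j.val = 0
        · exact absurd (by omega : i.val = j.val) hij'
        · simp only [g, dif_pos hi, dif_neg hj, addApex_adj_none_some]
          exact Set.mem_range_self _
        · simp only [g, dif_pos hj, dif_neg hi, addApex_adj_some_none]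
          exact Set.mem_range_self _
        · simp only [g, dif_neg hi, dif_neg hj, addApex_adj_some_some]
          refine hfadj' _ _ ?_ ?_ ?_
          · show i.val - 1 ≠ j.val - 1
            omega
          · show i.val - 1 < r - 1
            have := i.isLt
            omega
          · show j.val - 1 < r - 1
            have := j.isLt
            omega
    have hc2 : ∀ j : ℕ,
        cliqueCount (addApex (addApex (turanGraph (a 0) r) (Set.range f)) (Set.range g))
            (j + 1)
          = turanC (a 0) (j + 1) r + turanC (a 1) j (r - 1) + (k - 1).choose j := by
      intro j
      rw [cliqueCount_addApex,
        ncard_cliques_map _ (⊤ : SimpleGraph (Fin (k - 1))) g hginj hgadj j,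
        cliqueCount_top]
      congr 1
      exact hc1 j
    refine ⟨a 0 + 2,
      (addApex (addApex (turanGraph (a 0) r) (Set.range f)) (Set.range g)).map
        (((finSuccEquiv (a 0)).symm.optionCongr).trans (finSuccEquiv (a 0 + 1)).symm).toEmbedding,
      ?_, ?_⟩
    · rw [cliqueCount_map_equiv]
      have e1 := hc2 (k - 1)
      rw [show k - 1 + 1 = k from by omega] at e1
      rw [e1, hsum, Finset.sum_range_succ, Finset.sum_range_succ, Finset.sum_range_one]
      simp only [Nat.sub_zero]
      rw [Nat.choose_self, ha2,
        turanC_eq_choose (k - 2) (k - 2) (r - 2) (by omega), Nat.choose_self]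
    · rw [cliqueCount_map_equiv]
      rw [hc2 k, Finset.sum_range_succ, Finset.sum_range_succ, Finset.sum_range_one]
      simp only [Nat.sub_zero]
      rw [Nat.choose_eq_zero_of_lt (by omega : k - 1 < k), ha2,
        turanC_eq_choose (k - 2) (k - 2 + 1) (r - 2) (by omega),
        Nat.choose_eq_zero_of_lt (by omega : k - 2 < k - 2 + 1),
        show k - 1 + 1 = k from by omega]
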